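/- Let T = (V,A) be a tournament, X ⊆ V with |X| ≥ 3 and T[X] indecomposable. For u ∈ X, x ∈ X(u), and y ∈ V \ (X ∪ X(u)), if T[X ∪ {x,y}] is decomposable then {u,x} is an interval of T[X ∪ {x,y}]. -/

import Mathlib

/-- `A` is the arc relation of a tournament on the whole type. -/
def IsTournament {V : Type*} (A : V → V → Prop) : Prop :=
  (∀ x, ¬ A x x) ∧ ∀ x y : V, x ≠ y → (A x y ↔ ¬ A y x)

/-- `I` is an interval of the subtournament induced on `X`. -/
def IsIntervalOn {V : Type*} (A : V → V → Prop) (X I : Set V) : Prop :=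
  I ⊆ X ∧ ∀ x ∈ X \ I, (∀ i ∈ I, A x i) ∨ (∀ i ∈ I, A i x)

/-- Trivial intervals of the tournament induced on `X`. -/
def IsTrivialOn {V : Type*} (X I : Set V) : Prop :=
  I = ∅ ∨ (∃ v, I = {v}) ∨ I = X

/-- The subtournament induced on `X` is indecomposable. -/
def IndecomposableOn {V : Type*} (A : V → V → Prop) (X : Set V) : Prop :=
  ∀ I : Set V, IsIntervalOn A X I → IsTrivialOn X I

/-- The subtournament of `A` on `X` is isomorphic to the subtournament of `B` on `Y`. -/
def IsoOn {V W : Type*} (A : V → V → Prop) (B : W → W → Prop) (X : Set V) (Y : Set W) : Prop :=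
  ∃ f : X → Y, Function.Bijective f ∧ ∀ a b : X, A a b ↔ B (f a) (f b)

/-- `⟨X⟩`: the outside vertices comparable with all of `X` at once. -/
def bracketSet {V : Type*} (A : V → V → Prop) (X : Set V) : Set V :=
  {x | x ∉ X ∧ ((∀ u ∈ X, A x u) ∨ (∀ u ∈ X, A u x))}

/-- `X(u)`: the outside vertices `x` such that `{u, x}` is an interval of `T[X ∪ {x}]`. -/
def slotSet {V : Type*} (A : V → V → Prop) (X : Set V) (u : V) : Set V :=
  {x | x ∉ X ∧ IsIntervalOn A (X ∪ {x}) {u, x}}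

/-- `Ext(X)`: the outside vertices `x` such that `T[X ∪ {x}]` is indecomposable. -/
def extSet {V : Type*} (A : V → V → Prop) (X : Set V) : Set V :=
  {x | x ∉ X ∧ IndecomposableOn A (X ∪ {x})}

lemma interval_restrict {V : Type*} {A : V → V → Prop} {X Y I : Set V} (hXY : X ⊆ Y)
    (hI : IsIntervalOn A Y I) : IsIntervalOn A X (I ∩ X) := by
  refine ⟨Set.inter_subset_right, ?_⟩
  intro w hw
  have hwY : w ∈ Y \ I := ⟨hXY hw.1, fun h => hw.2 ⟨h, hw.1⟩⟩
  rcases hI.2 w hwY with h | h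
  · exact Or.inl fun i hi => h i hi.1
  · exact Or.inr fun i hi => h i hi.1

lemma interval_union {V : Type*} {A : V → V → Prop} (hA : IsTournament A) {Y I J : Set V}
    (hI : IsIntervalOn A Y I) (hJ : IsIntervalOn A Y J) {z : V} (hzI : z ∈ I) (hzJ : z ∈ J) :
    IsIntervalOn A Y (I ∪ J) := by
  refine ⟨Set.union_subset hI.1 hJ.1, ?_⟩
  intro w hw
  have hwI : w ∈ Y \ I := ⟨hw.1, fun h => hw.2 (Or.inl h)⟩
  have hwJ : w ∈ Y \ J := ⟨hw.1, fun h => hw.2 (Or.inr h)⟩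
  have hwz : w ≠ z := fun h => hwI.2 (h ▸ hzI)
  rcases hI.2 w hwI with h1 | h1 <;> rcases hJ.2 w hwJ with h2 | h2
  · exact Or.inl fun i hi => hi.elim (h1 i) (h2 i)
  · exact absurd (h2 z hzJ) ((hA.2 w z hwz).mp (h1 z hzI))
  · exact absurd (h1 z hzI) ((hA.2 w z hwz).mp (h2 z hzJ))
  · exact Or.inr fun i hi => hi.elim (h1 i) (h2 i)

lemma slot_not_bracket {V : Type*} [Fintype V] {A : V → V → Prop} (hA : IsTournament A)
    {X : Set V} (hX3 : 3 ≤ X.ncard) (hXind : IndecomposableOn A X) {u x : V}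
    (hu : u ∈ X) (hxX : x ∉ X)
    (hint : IsIntervalOn A (X ∪ {x}) {u, x})
    (hbr : (∀ v ∈ X, A x v) ∨ (∀ v ∈ X, A v x)) : False := by
  have hdiff : IsIntervalOn A X (X \ {u}) := by
    refine ⟨Set.diff_subset, ?_⟩
    intro w hw
    have hwu : w = u := by
      by_contra h
      exact hw.2 ⟨hw.1, by simpa using h⟩
    subst hwu
    have key : ∀ i ∈ X \ {w}, (A w i ∧ A x i) ∨ (A i w ∧ A i x) := by
      intro i hi
      have hiu : i ≠ w := by simpa using hi.2
      have hix : i ≠ x := fun h => hxX (h ▸ hi.1)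
      have := hint.2 i ⟨Or.inl hi.1, by simp [hiu, hix]⟩
      rcases this with h | h
      · exact Or.inr ⟨h w (by simp), h x (by simp)⟩
      · exact Or.inl ⟨h w (by simp), h x (by simp)⟩
    rcases hbr with hb | hb
    · refine Or.inl fun i hi => ?_
      rcases key i hi with h | h
      · exact h.1
      · have hix : x ≠ i := fun he => hxX (he ▸ hi.1)
        exact absurd h.2 ((hA.2 x i hix).mp (hb i hi.1))
    · refine Or.inr fun i hi => ?_
      rcases key i hi with h | h
      · have hix : i ≠ x := fun he => hxX (he ▸ hi.1)
        exact absurd h.2 ((hA.2 i x hix).mp (hb i hi.1))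
      · exact h.1
  have hfin : X.Finite := Set.toFinite X
  have hcard : (X \ {u}).ncard = X.ncard - 1 := Set.ncard_diff_singleton_of_mem hu
  rcases hXind _ hdiff with h | ⟨v, h⟩ | h
  · rw [h, Set.ncard_empty] at hcard; omega
  · rw [h, Set.ncard_singleton] at hcard; omega
  · have : u ∈ X \ {u} := h.symm ▸ hu
    simp at this

lemma slot_unique {V : Type*} [Fintype V] {A : V → V → Prop} (hA : IsTournament A)
    {X : Set V} (hX3 : 3 ≤ X.ncard) (hXind : IndecomposableOn A X) {u x v : V}
    (hu : u ∈ X) (hv : v ∈ X) (hxX : x ∉ X)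
    (h1 : IsIntervalOn A (X ∪ {x}) {u, x}) (h2 : IsIntervalOn A (X ∪ {x}) {v, x}) : v = u := by
  have hun : IsIntervalOn A (X ∪ {x}) ({u, x} ∪ {v, x}) :=
    interval_union hA h1 h2 (z := x) (by simp) (by simp)
  have hres := interval_restrict Set.subset_union_left hun
  have heq : (({u, x} ∪ {v, x}) ∩ X : Set V) = {u, v} := by
    ext w
    simp only [Set.mem_inter_iff, Set.mem_union, Set.mem_insert_iff, Set.mem_singleton_iff]
    constructor
    · rintro ⟨(h | h) | (h | h), hw⟩
      · exact Or.inl h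
      · exact absurd (h ▸ hw) hxX
      · exact Or.inr h
      · exact absurd (h ▸ hw) hxX
    · rintro (h | h)
      · exact ⟨Or.inl (Or.inl h), h ▸ hu⟩
      · exact ⟨Or.inr (Or.inl h), h ▸ hv⟩
  rw [heq] at hres
  rcases hXind _ hres with h | ⟨w, h⟩ | h
  · exact absurd h (Set.insert_nonempty u {v}).ne_empty
  · have hueq : u = w := by
      have := (Set.ext_iff.mp h u).mp (by simp)
      simpa using this
    have hveq : v = w := by
      have := (Set.ext_iff.mp h v).mp (by simp)
      simpa using this
    rw [hueq, hveq]
  · have : X.ncard ≤ 2 := by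
      rw [← h]
      exact (Set.ncard_insert_le _ _).trans (by simp)
    omega



lemma pair_forall {V : Type*} {p : V → Prop} {a b : V} (ha : p a) (hb : p b) :
    ∀ i ∈ ({a, b} : Set V), p i := by
  intro i hi
  rcases Set.mem_insert_iff.mp hi with h | h
  · rwa [h]
  · rwa [Set.mem_singleton_iff.mp h]

/-- For `u ∈ X`, `x ∈ X(u)` and `y ∉ X ∪ X(u)`, if `T[X ∪ {x,y}]` is decomposable then
`{u,x}` is an interval of `T[X ∪ {x,y}]`. -/
theorem slot_case {V : Type*} [Fintype V] (A : V → V → Prop)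
    (hA : IsTournament A) (X : Set V) (hX3 : 3 ≤ X.ncard)
    (hXind : IndecomposableOn A X)
    (u : V) (hu : u ∈ X) (x : V) (hx : x ∈ slotSet A X u)
    (y : V) (hy : y ∉ X ∪ slotSet A X u)
    (hdec : ¬ IndecomposableOn A (X ∪ {x, y})) :
    IsIntervalOn A (X ∪ {x, y}) {u, x} := by
  obtain ⟨hxX, hxint⟩ := hx
  have hyX : y ∉ X := fun h => hy (Or.inl h)
  have hyslot : y ∉ slotSet A X u := fun h => hy (Or.inr h)
  have hyint : ¬ IsIntervalOn A (X ∪ {y}) {u, y} := fun h => hyslot ⟨hyX, h⟩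
  have hxy : x ≠ y := fun h => hyslot (h ▸ ⟨hxX, hxint⟩)
  have hux : u ≠ x := fun h => hxX (h ▸ hu)
  have huy : u ≠ y := fun h => hyX (h ▸ hu)
  set Y := X ∪ {x, y} with hYdef
  have hxY : x ∈ Y := Or.inr (by simp)
  have hyY : y ∈ Y := Or.inr (by simp)
  have hXY : X ⊆ Y := Set.subset_union_left
  have hXxY : X ∪ {x} ⊆ Y := by
    rintro w (h | h)
    · exact Or.inl h
    · exact Or.inr (Or.inl h)
  have hXyY : X ∪ {y} ⊆ Y := by
    rintro w (h | h)
    · exact Or.inl h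
    · exact Or.inr (Or.inr h)
  -- base property from x ∈ X(u)
  have hbase : ∀ w ∈ X, w ≠ u → ((A w u ∧ A w x) ∨ (A u w ∧ A x w)) := by
    intro w hw hwu
    have hwx : w ≠ x := fun h => hxX (h ▸ hw)
    have := hxint.2 w ⟨Or.inl hw, by simp [hwu, hwx]⟩
    rcases this with h | h
    · exact Or.inl ⟨h u (by simp), h x (by simp)⟩
    · exact Or.inr ⟨h u (by simp), h x (by simp)⟩
  -- building the goal from the y-condition
  have buildGoal : ((A y u ∧ A y x) ∨ (A u y ∧ A x y)) → IsIntervalOn A Y {u, x} := by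
    intro hyc
    refine ⟨?_, ?_⟩
    · intro w hw
      simp only [Set.mem_insert_iff, Set.mem_singleton_iff] at hw
      rcases hw with rfl | rfl
      · exact Or.inl hu
      · exact hxY
    · intro w hw
      have hw2 : w ≠ u ∧ w ≠ x := by
        have := hw.2
        simp only [Set.mem_insert_iff, Set.mem_singleton_iff] at this
        push_neg at this
        exact this
      have hres : (A w u ∧ A w x) ∨ (A u w ∧ A x w) := by
        rcases hw.1 with h | h
        · exact hbase w h hw2.1
        · simp only [Set.mem_insert_iff, Set.mem_singleton_iff] at h
          rcases h with rfl | rfl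
          · exact absurd rfl hw2.2
          · exact hyc
      rcases hres with h | h
      · refine Or.inl fun i hi => ?_
        simp only [Set.mem_insert_iff, Set.mem_singleton_iff] at hi
        rcases hi with rfl | rfl
        exacts [h.1, h.2]
      · refine Or.inr fun i hi => ?_
        simp only [Set.mem_insert_iff, Set.mem_singleton_iff] at hi
        rcases hi with rfl | rfl
        exacts [h.1, h.2]
  -- obtain the nontrivial interval
  simp only [IndecomposableOn, not_forall] at hdec
  obtain ⟨I, hI, hItriv⟩ := hdec
  simp only [IsTrivialOn, not_or, not_exists] at hItriv
  obtain ⟨hIne, hIsing, hIY⟩ := hItriv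
  have htriv := hXind _ (interval_restrict hXY hI)
  rcases htriv with hcA | ⟨v, hcB⟩ | hcC
  · -- Case A : I ∩ X = ∅, so I ⊆ {x, y}
    have hsub : I ⊆ {x, y} := by
      intro i hi
      rcases hI.1 hi with h | h
      · exact absurd (show i ∈ I ∩ X from ⟨hi, h⟩) (by simp [hcA])
      · exact h
    by_cases hxI : x ∈ I
    · by_cases hyI : y ∈ I
      · -- I = {x, y} : contradiction with y ∉ X(u)
        have hIeq : I = {x, y} := Set.Subset.antisymm hsub (by
          rintro i hi
          simp only [Set.mem_insert_iff, Set.mem_singleton_iff] at hi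
          rcases hi with rfl | rfl
          exacts [hxI, hyI])
        exfalso
        apply hyint
        refine ⟨?_, ?_⟩
        · intro w hw
          simp only [Set.mem_insert_iff, Set.mem_singleton_iff] at hw
          rcases hw with rfl | rfl
          · exact Or.inl hu
          · exact Or.inr rfl
        · intro w hw
          have hw2 : w ≠ u ∧ w ≠ y := by
            have := hw.2
            simp only [Set.mem_insert_iff, Set.mem_singleton_iff] at this
            push_neg at this
            exact this
          have hwX : w ∈ X := by
            rcases hw.1 with h | h
            · exact h
            · exact absurd (by simpa using h) hw2.2
          have hwx : w ≠ x := fun h => hxX (h ▸ hwX)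
          have hwI : w ∈ Y \ I := ⟨Or.inl hwX, by rw [hIeq]; simp [hwx, hw2.2]⟩
          have hIu := hI.2 w hwI
          rcases hbase w hwX hw2.1 with hb | hb
          · refine Or.inl (pair_forall hb.1 ?_)
            rcases hIu with h | h
            · exact h y (by rw [hIeq]; simp)
            · exact absurd hb.2 ((hA.2 x w hwx.symm).mp (h x (by rw [hIeq]; simp)))
          · refine Or.inr (pair_forall hb.1 ?_)
            rcases hIu with h | h
            · exact absurd (h x (by rw [hIeq]; simp)) ((hA.2 x w hwx.symm).mp hb.2)
            · exact h y (by rw [hIeq]; simp)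
      · -- I ⊆ {x} : trivial, contradiction
        have : I ⊆ {x} := by
          intro i hi
          rcases hsub hi with h | h
          · exact h
          · exact absurd (show i = y by simpa using h) (fun he => hyI (he ▸ hi))
        rcases Set.subset_singleton_iff_eq.mp this with h | h
        · exact absurd h hIne
        · exact absurd h (hIsing x)
    · have : I ⊆ {y} := by
        intro i hi
        rcases hsub hi with h | h
        · exact absurd ((by simpa using h : i = x) ▸ hi) hxI
        · exact h
      rcases Set.subset_singleton_iff_eq.mp this with h | h
      · exact absurd h hIne
      · exact absurd h (hIsing y)
  · -- Case B : I ∩ X = {v}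
    have hvI : v ∈ I := ((Set.ext_iff.mp hcB v).mpr rfl).1
    have hvX : v ∈ X := ((Set.ext_iff.mp hcB v).mpr rfl).2
    have hvx : v ≠ x := fun h => hxX (h ▸ hvX)
    have hvy : v ≠ y := fun h => hyX (h ▸ hvX)
    have hsub : I ⊆ {v, x, y} := by
      intro i hi
      rcases hI.1 hi with h | h
      · have : i ∈ I ∩ X := ⟨hi, h⟩
        rw [hcB] at this
        exact Or.inl this
      · simp only [Set.mem_insert_iff, Set.mem_singleton_iff] at h ⊢
        tauto
    by_cases hxI : x ∈ I
    · -- {v, x} is an interval of X ∪ {x}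
      have hresx := interval_restrict hXxY hI
      have heqx : I ∩ (X ∪ {x}) = {v, x} := by
        ext i
        simp only [Set.mem_inter_iff, Set.mem_union, Set.mem_insert_iff, Set.mem_singleton_iff]
        constructor
        · rintro ⟨hi, hix⟩
          rcases hsub hi with h | h
          · exact Or.inl h
          · simp only [Set.mem_insert_iff, Set.mem_singleton_iff] at h
            rcases h with rfl | rfl
            · exact Or.inr rfl
            · rcases hix with h | h
              · exact absurd h hyX
              · exact absurd h.symm hxy
        · rintro (rfl | rfl)
          · exact ⟨hvI, Or.inl hvX⟩
          · exact ⟨hxI, Or.inr rfl⟩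
      rw [heqx] at hresx
      have hveq : v = u := slot_unique hA hX3 hXind hu hvX hxX hxint hresx
      subst hveq
      by_cases hyI : y ∈ I
      · -- I = {v, x, y}; then {v, y} interval of X ∪ {y} : contradiction
        exfalso
        apply hyint
        have hresy := interval_restrict hXyY hI
        have heqy : I ∩ (X ∪ {y}) = {v, y} := by
          ext i
          simp only [Set.mem_inter_iff, Set.mem_union, Set.mem_insert_iff, Set.mem_singleton_iff]
          constructor
          · rintro ⟨hi, hiy⟩
            rcases hsub hi with h | h
            · exact Or.inl h
            · simp only [Set.mem_insert_iff, Set.mem_singleton_iff] at h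
              rcases h with rfl | rfl
              · rcases hiy with h | h
                · exact absurd h hxX
                · exact absurd h hxy
              · exact Or.inr rfl
          · rintro (rfl | rfl)
            · exact ⟨hvI, Or.inl hvX⟩
            · exact ⟨hyI, Or.inr rfl⟩
        rw [heqy] at hresy
        exact hresy
      · -- I = {v, x} = {u, x} : done
        have hIeq : I = {v, x} := by
          apply Set.Subset.antisymm
          · intro i hi
            rcases hsub hi with h | h
            · exact Or.inl h
            · simp only [Set.mem_insert_iff, Set.mem_singleton_iff] at h
              rcases h with rfl | rfl
              · exact Or.inr rfl
              · exact absurd hi hyI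
          · rintro i hi
            simp only [Set.mem_insert_iff, Set.mem_singleton_iff] at hi
            rcases hi with rfl | rfl
            exacts [hvI, hxI]
        rw [← hIeq]
        exact hI
    · by_cases hyI : y ∈ I
      · -- I = {v, y}
        have hIeq : I = {v, y} := by
          apply Set.Subset.antisymm
          · intro i hi
            rcases hsub hi with h | h
            · exact Or.inl h
            · simp only [Set.mem_insert_iff, Set.mem_singleton_iff] at h
              rcases h with rfl | rfl
              · exact absurd hi hxI
              · exact Or.inr rfl
          · rintro i hi
            simp only [Set.mem_insert_iff, Set.mem_singleton_iff] at hi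
            rcases hi with rfl | rfl
            exacts [hvI, hyI]
        by_cases hvu : v = u
        · -- y would be in X(u)
          exfalso
          apply hyint
          subst hvu
          have hresy := interval_restrict hXyY hI
          have heqy : I ∩ (X ∪ {y}) = {v, y} := by
            rw [hIeq]
            apply Set.Subset.antisymm Set.inter_subset_left
            rintro i hi
            simp only [Set.mem_insert_iff, Set.mem_singleton_iff] at hi
            rcases hi with rfl | rfl
            · exact ⟨by simp, Or.inl hvX⟩
            · exact ⟨by simp, Or.inr rfl⟩
          rw [heqy] at hresy
          exact hresy
        · -- derive the y-condition and build the goal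
          apply buildGoal
          have huI : u ∈ Y \ I := ⟨Or.inl hu, by rw [hIeq]; simp [hvu, huy]; tauto⟩
          have hxI' : x ∈ Y \ I := ⟨hxY, by rw [hIeq]; simp [hvx, hxy]; tauto⟩
          have hIu := hI.2 u huI
          have hIx := hI.2 x hxI'
          have hvXu : v ≠ u := hvu
          rcases hbase v hvX hvXu with hb | hb
          · -- A v u ∧ A v x
            refine Or.inl ⟨?_, ?_⟩
            · rcases hIu with h | h
              · exact absurd hb.1 ((hA.2 u v (Ne.symm hvXu)).mp (h v (by rw [hIeq]; simp)))
              · exact h y (by rw [hIeq]; simp)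
            · rcases hIx with h | h
              · exact absurd hb.2 ((hA.2 x v hvx.symm).mp (h v (by rw [hIeq]; simp)))
              · exact h y (by rw [hIeq]; simp)
          · -- A u v ∧ A x v
            refine Or.inr ⟨?_, ?_⟩
            · rcases hIu with h | h
              · exact h y (by rw [hIeq]; simp)
              · exact absurd (h v (by rw [hIeq]; simp)) ((hA.2 u v (Ne.symm hvXu)).mp hb.1)
            · rcases hIx with h | h
              · exact h y (by rw [hIeq]; simp)
              · exact absurd (h v (by rw [hIeq]; simp)) ((hA.2 x v hvx.symm).mp hb.2)
      · -- I ⊆ {v} : trivial, contradiction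
        have : I ⊆ {v} := by
          intro i hi
          rcases hsub hi with h | h
          · exact h
          · simp only [Set.mem_insert_iff, Set.mem_singleton_iff] at h
            rcases h with rfl | rfl
            · exact absurd hi hxI
            · exact absurd hi hyI
        rcases Set.subset_singleton_iff_eq.mp this with h | h
        · exact absurd h hIne
        · exact absurd h (hIsing v)
  · -- Case C : I ∩ X = X, i.e. X ⊆ I
    have hXI : X ⊆ I := fun w hw => ((Set.ext_iff.mp hcC w).mpr hw).1
    by_cases hxI : x ∈ I
    · by_cases hyI : y ∈ I
      · -- I = Y, contradiction
        refine absurd (Set.Subset.antisymm hI.1 ?_) hIY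
        rintro i (h | h)
        · exact hXI h
        · simp only [Set.mem_insert_iff, Set.mem_singleton_iff] at h
          rcases h with rfl | rfl
          exacts [hxI, hyI]
      · -- I = X ∪ {x}; y outside gives the y-condition
        have hIeq : I = X ∪ {x} := by
          apply Set.Subset.antisymm
          · intro i hi
            rcases hI.1 hi with h | h
            · exact Or.inl h
            · simp only [Set.mem_insert_iff, Set.mem_singleton_iff] at h
              rcases h with rfl | rfl
              · exact Or.inr rfl
              · exact absurd hi hyI
          · rintro i (h | h)
            · exact hXI h
            · exact (by simpa using h : i = x) ▸ hxI
        apply buildGoal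
        have hynI : y ∉ I := by
          rw [hIeq]
          rintro (h | h)
          · exact hyX h
          · exact hxy (show y = x by simpa using h).symm
        have huI : u ∈ I := by rw [hIeq]; exact Or.inl hu
        have hxI2 : x ∈ I := by rw [hIeq]; exact Or.inr rfl
        rcases hI.2 y ⟨hyY, hynI⟩ with h | h
        · exact Or.inl ⟨h u huI, h x hxI2⟩
        · exact Or.inr ⟨h u huI, h x hxI2⟩
    · -- x ∉ I, but X ⊆ I : x is uniformly comparable to X, contradiction
      exfalso
      have hxI' : x ∈ Y \ I := ⟨hxY, hxI⟩
      rcases hI.2 x hxI' with h | h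
      · exact slot_not_bracket hA hX3 hXind hu hxX hxint (Or.inl fun v hv => h v (hXI hv))
      · exact slot_not_bracket hA hX3 hXind hu hxX hxint (Or.inr fun v hv => h v (hXI hv))
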